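/- If the normalized power prior π(θ,δ|D₀) = π₀(δ)·L(θ|D₀)^δπ₀(θ)/C(δ) with C(δ) = ∫L(θ|D₀)^δπ₀(θ)dθ is used, then the marginal prior of δ obtained by integrating θ out equals the initial prior π₀(δ); whereas under the joint power prior π(θ,δ|D₀) ∝ L(θ|D₀)^δπ₀(θ)π₀(δ), the marginal of δ is proportional to π₀(δ)C(δ), which differs from π₀(δ) unless C(δ) is constant in δ. -/

import Mathlib

open MeasureTheory Real Set

/-- the normalized power prior leaves the marginal prior of δ equal to the
initial prior π₀(δ), while the joint power prior yields a marginal proportional to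
π₀(δ)C(δ), which coincides with π₀(δ) exactly when C is constant on [0,1]. -/
theorem npp_preserves_delta_prior {Θ : Type*} [MeasurableSpace Θ] (μ : Measure Θ)
    (L π₀ : Θ → ℝ) (hL : ∀ θ, 0 < L θ) (hπ₀ : ∀ θ, 0 ≤ π₀ θ)
    (hπ₀1 : ∫ θ, π₀ θ ∂μ = 1)
    (pδ : ℝ → ℝ) (hpδpos : ∀ δ ∈ Icc (0:ℝ) 1, 0 < pδ δ)
    (hpδ1 : ∫ t in (0:ℝ)..1, pδ t = 1)
    (hpδint : IntervalIntegrable pδ volume 0 1)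
    (C : ℝ → ℝ) (hC : ∀ δ, C δ = ∫ θ, L θ ^ δ * π₀ θ ∂μ)
    (hCpos : ∀ δ ∈ Icc (0:ℝ) 1, 0 < C δ)
    (hfin : ∀ δ ∈ Icc (0:ℝ) 1, Integrable (fun θ => L θ ^ δ * π₀ θ) μ)
    (hCint : IntervalIntegrable (fun t => pδ t * C t) volume 0 1) :
    (∀ δ ∈ Icc (0:ℝ) 1, ∫ θ, pδ δ * (L θ ^ δ * π₀ θ / C δ) ∂μ = pδ δ) ∧
    ((∀ δ ∈ Icc (0:ℝ) 1,
        pδ δ * C δ / (∫ t in (0:ℝ)..1, pδ t * C t) = pδ δ) ↔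
      ∃ c : ℝ, ∀ δ ∈ Icc (0:ℝ) 1, C δ = c) := by
  constructor
  · intro δ hδ
    have h1 : ∫ θ, pδ δ * (L θ ^ δ * π₀ θ / C δ) ∂μ
        = pδ δ / C δ * ∫ θ, L θ ^ δ * π₀ θ ∂μ := by
      rw [← MeasureTheory.integral_const_mul]
      congr 1; ext θ; ring
    rw [h1, ← hC δ]
    field_simp [(hCpos δ hδ).ne']
  · constructor
    · intro h
      refine ⟨∫ t in (0:ℝ)..1, pδ t * C t, fun δ hδ => ?_⟩
      have h1 := h δ hδ
      have hp := (hpδpos δ hδ).ne'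
      set I := ∫ t in (0:ℝ)..1, pδ t * C t with hI
      by_cases hI0 : I = 0
      · rw [hI0, div_zero] at h1
        exact absurd h1.symm hp
      · field_simp at h1
        exact h1
    · rintro ⟨c, hc⟩
      intro δ hδ
      have hc0 : 0 < c := hc 0 (by norm_num) ▸ hCpos 0 (by norm_num)
      have hint : ∫ t in (0:ℝ)..1, pδ t * C t = c := by
        have : ∫ t in (0:ℝ)..1, pδ t * C t = ∫ t in (0:ℝ)..1, pδ t * c := by
          apply intervalIntegral.integral_congr
          intro t ht
          rw [uIcc_of_le (by norm_num : (0:ℝ) ≤ 1)] at ht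
          simp [hc t ht]
        rw [this, intervalIntegral.integral_mul_const, hpδ1, one_mul]
      rw [hint, hc δ hδ]
      field_simp
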